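/- Suppose Condition A holds. Then arg(k_z²) ∈ [−3π/4, −π/4], arg(k_z) ∈ [5π/8, 7π/8], Re(k_z) < 0, and Im(k_z) ≥ √((−2μεω₁ω₂/c² + μμ₀σω₁)/(2(√2 + 1))). -/

import Mathlib

open Real

lemma aux_sin_bound {θ : ℝ} (h1 : -π < θ) (h2 : θ < 0)
    (h3 : Real.sin θ ≤ -(Real.sqrt 2 / 2)) :
    θ ∈ Set.Icc (-(3 * π / 4)) (-(π / 4)) := by
  have hs : Real.sin (-(π/4)) = -(Real.sqrt 2 / 2) := by
    rw [Real.sin_neg, Real.sin_pi_div_four]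
  have hpi := Real.pi_pos
  have hmem : (-(π/4) : ℝ) ∈ Set.Icc (-(π/2)) (π/2) := by
    constructor <;> nlinarith
  constructor
  · by_contra hlt
    push_neg at hlt
    have h4 : -π - θ ∈ Set.Icc (-(π/2)) (π/2) := by constructor <;> nlinarith
    have h5 := Real.strictMonoOn_sin hmem h4 (by nlinarith)
    have h6 : Real.sin (-π - θ) = Real.sin θ := by
      rw [show -π - θ = -(π + θ) by ring, Real.sin_neg, Real.sin_add]
      simp
    rw [hs, h6] at h5
    linarith
  · by_contra hlt
    push_neg at hlt
    have h4 : θ ∈ Set.Icc (-(π/2)) (π/2) := by constructor <;> nlinarith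
    have h5 := Real.strictMonoOn_sin hmem h4 (by nlinarith)
    rw [hs] at h5
    linarith

lemma aux_arg_cone {z : ℂ} (him : z.im < 0) (hre : |z.re| ≤ -z.im) :
    Complex.arg z ∈ Set.Icc (-(3 * π / 4)) (-(π / 4)) := by
  have hz : z ≠ 0 := fun h => by simp [h] at him
  have habs : (0:ℝ) < ‖z‖ := norm_pos_iff.mpr hz
  have hr2 : Real.sqrt 2 * Real.sqrt 2 = 2 := Real.mul_self_sqrt (by norm_num)
  have hr1 : (1:ℝ) < Real.sqrt 2 := by nlinarith [Real.sqrt_nonneg 2]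
  have hA : ‖z‖ ≤ Real.sqrt 2 * (-z.im) := by
    have h1 : (‖z‖)^2 = z.re^2 + z.im^2 := by
      rw [Complex.sq_norm, Complex.normSq_apply]; ring
    have h2 : z.re^2 ≤ z.im^2 := by nlinarith [abs_nonneg z.re, sq_abs z.re]
    have h3 : (‖z‖)^2 ≤ (Real.sqrt 2 * (-z.im))^2 := by nlinarith
    have h4 := Real.sqrt_le_sqrt h3
    rwa [Real.sqrt_sq (norm_nonneg z),
      Real.sqrt_sq (by nlinarith : (0:ℝ) ≤ Real.sqrt 2 * (-z.im))] at h4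
  have hsin : Real.sin (Complex.arg z) ≤ -(Real.sqrt 2 / 2) := by
    rw [Complex.sin_arg]
    rw [div_le_iff₀ habs]
    nlinarith
  exact aux_sin_bound (Complex.neg_pi_lt_arg z) (Complex.arg_neg_iff.2 him) hsin

lemma aux_one_lt_sqrt2 : (1:ℝ) < Real.sqrt 2 := by
  nlinarith [Real.sqrt_nonneg 2, Real.mul_self_sqrt (show (0:ℝ) ≤ 2 by norm_num)]

lemma aux_ineq1 (a b C ω1 ω2 s r : ℝ) (ha : 0 < a) (hb : 0 ≤ b) (hC : 0 < C)
    (hω1 : 0 < ω1) (hr2 : r * r = 2) (hr1 : 1 < r) (hs2 : s * s = 2 + C ^ 2)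
    (hsr : r ≤ s) (hba : b ≤ 2 * a * C * ω1)
    (hc2 : -(1 + (s - C)) * ω1 ≤ ω2) (hc3 : ω2 ≤ (1 - r) * ω1) :
    2 * a * ω1 * ω2 - b * ω1 ≤ a * (ω1 ^ 2 - ω2 ^ 2) + b * ω2 := by
  rcases le_or_gt (ω1 + ω2) 0 with hsum | hsum
  · have hQ : (0:ℝ) ≤ (C - 1 + s) * ω1 - ω2 := by
      nlinarith [mul_pos hω1 (show (0:ℝ) < C + s + r - 2 by linarith)]
    have hP : (0:ℝ) ≤ ω2 + (1 + (s - C)) * ω1 := by linarith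
    have hPQ : (0:ℝ) ≤ (ω2 + (1 + (s - C)) * ω1) * ((C - 1 + s) * ω1 - ω2) :=
      mul_nonneg hP hQ
    have hexp : (ω2 + (1 + (s - C)) * ω1) * ((C - 1 + s) * ω1 - ω2)
        = (1 + 2*C)*ω1^2 - ω2^2 + (2*C - 2)*ω1*ω2 := by
      linear_combination (ω1^2) * hs2
    rw [hexp] at hPQ
    have key1 : (0:ℝ) ≤ a * ((1 + 2*C)*ω1^2 - ω2^2 + (2*C - 2)*ω1*ω2) :=
      mul_nonneg ha.le hPQ
    have key2 : (0:ℝ) ≤ (2*a*C*ω1 - b) * (-(ω1 + ω2)) :=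
      mul_nonneg (by linarith) (by linarith)
    nlinarith [key1, key2]
  · have h8 : ω1 + ω2 ≤ r * ω1 := by
      nlinarith [mul_nonneg (show (0:ℝ) ≤ 2 * r - 2 by linarith) hω1.le]
    have h9 : (ω1 + ω2) * (ω1 + ω2) ≤ (r * ω1) * (r * ω1) :=
      mul_self_le_mul_self hsum.le h8
    have h10 : (r * ω1) * (r * ω1) = 2 * ω1^2 := by linear_combination (ω1^2) * hr2
    rw [h10] at h9
    have key1 : (0:ℝ) ≤ a * (2*ω1^2 - (ω1 + ω2)^2) :=
      mul_nonneg ha.le (by nlinarith [h9])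
    have key2 : (0:ℝ) ≤ b * (ω1 + ω2) := mul_nonneg hb hsum.le
    nlinarith [key1, key2]

lemma aux_ineq2 (a b ω1 ω2 r : ℝ) (ha : 0 < a) (hb : 0 ≤ b)
    (hω1 : 0 < ω1) (hr2 : r * r = 2) (hr1 : 1 < r)
    (hc3 : ω2 ≤ (1 - r) * ω1) :
    a * (ω1 ^ 2 - ω2 ^ 2) + b * ω2 ≤ -(2 * a * ω1 * ω2 - b * ω1) := by
  have h8 : r * ω1 ≤ ω1 - ω2 := by linarith
  have h9 : (r * ω1) * (r * ω1) ≤ (ω1 - ω2) * (ω1 - ω2) :=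
    mul_self_le_mul_self (by positivity) h8
  have h10 : (r * ω1) * (r * ω1) = 2 * ω1^2 := by linear_combination (ω1^2) * hr2
  rw [h10] at h9
  have key1 : (0:ℝ) ≤ a * ((ω1 - ω2)^2 - 2*ω1^2) :=
    mul_nonneg ha.le (by nlinarith [h9])
  have key2 : (0:ℝ) ≤ b * (ω1 - ω2) :=
    mul_nonneg hb (by nlinarith [h8, mul_pos (show (0:ℝ) < r by linarith) hω1])
  nlinarith [key1, key2]

lemma aux_key (A R I r : ℝ) (hA0 : 0 ≤ A) (hA2 : A ^ 2 = R ^ 2 + I ^ 2)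
    (hIneg : I < 0) (hRle : R ≤ -I) (hr2 : r * r = 2) (hr1 : 1 < r) :
    (r - 1) * (-I) ≤ A - R := by
  rcases le_or_gt (R + (r - 1) * (-I)) 0 with hB | hB
  · linarith
  · have hB2 : (R + (r - 1) * (-I))^2 = R^2 - 2*(r - 1)*R*I + (3 - 2*r)*I^2 := by
      linear_combination (I^2) * hr2
    have hII : (0:ℝ) ≤ I * (I + R) := by
      have h := mul_nonneg (neg_nonneg.2 hIneg.le) (show (0:ℝ) ≤ -(I + R) by linarith)
      nlinarith [h]
    have hprod : (0:ℝ) ≤ (r - 1) * (I * (I + R)) :=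
      mul_nonneg (by linarith) hII
    have hsq : (R + (r - 1) * (-I))^2 ≤ A^2 := by nlinarith [hB2, hA2, hprod]
    nlinarith [hsq, hB, hA0]

/-- With k_z² := μεω²/c² − iμ₀μσω for ω = ω₁ + iω₂ (ω₁ > 0, ε > 0, σ ≥ 0),
and k_z the square root of k_z² with positive imaginary part, suppose Condition A holds:
there exists C > 0 such that σ/ε ≤ 2Cω₁/(μ₀c²) and −(1+φ(C))ω₁ ≤ ω₂ ≤ (1−√2)ω₁ with
φ(C) = √(2+C²) − C. Then arg(k_z²) ∈ [−3π/4, −π/4], arg(k_z) ∈ [5π/8, 7π/8],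
Re(k_z) < 0, and Im(k_z) ≥ √((−2μεω₁ω₂/c² + μμ₀σω₁)/(2(√2 + 1))). -/
theorem stmt_1 (μ μ0 c ε σ : ℝ) (hμ : 0 < μ) (hμ0 : 0 < μ0) (hc : 0 < c)
    (hε : 0 < ε) (hσ : 0 ≤ σ)
    (ω1 ω2 : ℝ) (hω1 : 0 < ω1) (ω : ℂ) (hω : ω = Complex.mk ω1 ω2)
    (K : ℂ) (hK : K = (μ * ε / c ^ 2 : ℝ) * ω ^ 2 - Complex.I * (μ0 * μ * σ : ℝ) * ω)
    (kz : ℂ) (hkz : kz ^ 2 = K) (hkzim : 0 < kz.im)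
    (condA : ∃ C > (0 : ℝ), σ / ε ≤ 2 * C * ω1 / (μ0 * c ^ 2) ∧
      -(1 + (Real.sqrt (2 + C ^ 2) - C)) * ω1 ≤ ω2 ∧ ω2 ≤ (1 - Real.sqrt 2) * ω1) :
    Complex.arg K ∈ Set.Icc (-(3 * Real.pi / 4)) (-(Real.pi / 4)) ∧
      Complex.arg kz ∈ Set.Icc (5 * Real.pi / 8) (7 * Real.pi / 8) ∧
      kz.re < 0 ∧
      Real.sqrt ((-2 * μ * ε * ω1 * ω2 / c ^ 2 + μ * μ0 * σ * ω1) /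
        (2 * (Real.sqrt 2 + 1))) ≤ kz.im := by
  obtain ⟨C, hC, hc1, hc2, hc3⟩ := condA
  set r := Real.sqrt 2 with hrdef
  set s := Real.sqrt (2 + C ^ 2) with hsdef
  have hr2 : r * r = 2 := Real.mul_self_sqrt (by norm_num)
  have hr0 : 0 ≤ r := Real.sqrt_nonneg 2
  have hr1 : (1:ℝ) < r := aux_one_lt_sqrt2
  have hs2 : s * s = 2 + C ^ 2 := Real.mul_self_sqrt (by positivity)
  have hsr : r ≤ s := Real.sqrt_le_sqrt (by linarith [sq_nonneg C])
  have ha : (0:ℝ) < μ * ε / c ^ 2 := by positivity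
  have hb : (0:ℝ) ≤ μ0 * μ * σ := by positivity
  have hω2 : ω2 < 0 := by
    have h1 : (1 - r) * ω1 < 0 := mul_neg_of_neg_of_pos (by linarith) hω1
    linarith
  have hba : μ0 * μ * σ ≤ 2 * (μ * ε / c ^ 2) * C * ω1 := by
    rw [div_le_div_iff₀ hε (by positivity)] at hc1
    rw [show 2 * (μ * ε / c ^ 2) * C * ω1 = (2 * μ * ε * C * ω1) / c ^ 2 by ring,
      le_div_iff₀ (by positivity : (0:ℝ) < c ^ 2)]
    have h := mul_le_mul_of_nonneg_left hc1 hμ.le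
    linarith [h]
  have hKre : K.re = μ*ε/c^2*(ω1^2 - ω2^2) + μ0*μ*σ*ω2 := by
    rw [hK, hω]
    simp [Complex.mul_re, Complex.mul_im, pow_two, -Complex.ofReal_mul, -Complex.ofReal_div,
      Complex.ofReal_re, Complex.ofReal_im] <;> ring
  have hKim : K.im = 2*(μ*ε/c^2)*ω1*ω2 - μ0*μ*σ*ω1 := by
    rw [hK, hω]
    simp [Complex.mul_re, Complex.mul_im, pow_two, -Complex.ofReal_mul, -Complex.ofReal_div,
      Complex.ofReal_re, Complex.ofReal_im] <;> ring
  have hIneg : K.im < 0 := by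
    rw [hKim]
    have h1 : 0 < (μ * ε / c ^ 2) * ω1 * (-ω2) :=
      mul_pos (mul_pos ha hω1) (neg_pos.2 hω2)
    have h2 : 0 ≤ μ0 * μ * σ * ω1 := by positivity
    linarith
  have hineq1 : K.im ≤ K.re := by
    rw [hKre, hKim]
    have := aux_ineq1 (μ*ε/c^2) (μ0*μ*σ) C ω1 ω2 s r ha hb hC hω1 hr2 hr1 hs2 hsr hba hc2 hc3
    linarith
  have hineq2 : K.re ≤ -K.im := by
    rw [hKre, hKim]
    have := aux_ineq2 (μ*ε/c^2) (μ0*μ*σ) ω1 ω2 r ha hb hω1 hr2 hr1 hc3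
    linarith
  have hargK : Complex.arg K ∈ Set.Icc (-(3 * π / 4)) (-(π / 4)) :=
    aux_arg_cone hIneg (abs_le.2 ⟨by linarith, hineq2⟩)
  -- Re kz < 0
  have hkzim2 : (kz ^ 2).im = 2 * kz.re * kz.im := by
    simp [pow_two, Complex.mul_im] <;> ring
  have hkre : kz.re < 0 := by
    have h1 : 2 * kz.re * kz.im = K.im := by rw [← hkzim2, hkz]
    by_contra h
    push_neg at h
    have h2 := mul_nonneg h hkzim.le
    linarith
  -- arg kz
  have hkz0 : kz ≠ 0 := fun h => by simp [h] at hkzim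
  have hw0 : -kz ≠ 0 := neg_ne_zero.2 hkz0
  have hwim : (-kz).im < 0 := by simp [hkzim]
  have hwre : (0:ℝ) < (-kz).re := by simp [Complex.neg_re]; linarith
  have hwarg_lt : Complex.arg (-kz) < 0 := Complex.arg_neg_iff.2 hwim
  have hwarg_gt : -(π/2) < Complex.arg (-kz) := Complex.neg_pi_div_two_lt_arg_iff.2 (Or.inl hwre)
  have hww : -kz * -kz = K := by rw [← hkz]; ring
  have hpi := Real.pi_pos
  have hargmul : Complex.arg (-kz * -kz) = Complex.arg (-kz) + Complex.arg (-kz) :=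
    Complex.arg_mul hw0 hw0 ⟨by linarith, by linarith⟩
  rw [hww] at hargmul
  have hargneg : Complex.arg kz = Complex.arg (-kz) + π := by
    have h := Complex.arg_neg_eq_arg_add_pi_of_im_neg hwim
    rwa [neg_neg] at h
  have hargkz : Complex.arg kz ∈ Set.Icc (5 * π / 8) (7 * π / 8) := by
    obtain ⟨hl, hu⟩ := hargK
    rw [hargmul] at hl hu
    exact ⟨by linarith, by linarith⟩
  -- imaginary part bound
  have habsK : kz.re^2 + kz.im^2 = ‖K‖ := by
    rw [← hkz, norm_pow, Complex.sq_norm, Complex.normSq_apply]; ring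
  have hre2 : kz.re^2 - kz.im^2 = K.re := by
    rw [← hkz]
    simp [pow_two, Complex.mul_re] <;> ring
  have hA0 : 0 ≤ ‖K‖ := norm_nonneg K
  have hA2 : (‖K‖)^2 = K.re^2 + K.im^2 := by
    rw [Complex.sq_norm, Complex.normSq_apply]; ring
  have hkey : (r - 1) * (-K.im) ≤ ‖K‖ - K.re :=
    aux_key (‖K‖) K.re K.im r hA0 hA2 hIneg hineq2 hr2 hr1
  have h2y2 : 2 * kz.im^2 = ‖K‖ - K.re := by linarith
  have hfin : (-2 * μ * ε * ω1 * ω2 / c ^ 2 + μ * μ0 * σ * ω1) / (2 * (r + 1)) ≤ kz.im^2 := by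
    have hE : -2 * μ * ε * ω1 * ω2 / c ^ 2 + μ * μ0 * σ * ω1 = -K.im := by
      rw [hKim]; ring
    rw [hE, div_le_iff₀ (by linarith : (0:ℝ) < 2 * (r + 1))]
    have h11 : (r - 1) * (-K.im) * (r + 1) = -K.im := by linear_combination (-K.im) * hr2
    have h12 : (r - 1) * (-K.im) * (r + 1) ≤ (‖K‖ - K.re) * (r + 1) :=
      mul_le_mul_of_nonneg_right hkey (by linarith)
    have h13 : kz.im^2 * (2 * (r + 1)) = (‖K‖ - K.re) * (r + 1) := by
      linear_combination (r + 1) * h2y2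
    linarith
  refine ⟨hargK, hargkz, hkre, ?_⟩
  have := Real.sqrt_le_sqrt hfin
  rwa [Real.sqrt_sq hkzim.le] at this
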